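/- Fix δ ∈ (0,1). There exists ε₀ > 0 such that for every ε ∈ (0, ε₀) there is N₀ with the following property for all integers N ≥ N₀: write ρ := 1 − N^{−δ}, and let K_ε ∈ ℕ satisfy ( ρ(1−ρ) )^{1/2^{K_ε}} ≤ ε ≤ ( ρ(1−ρ) )^{1/2^{K_ε+1}}. Then for every k with 0 ≤ k ≤ K_ε one has p_k^{(N,δ)} ≥ ( √ρ · (1 − 3ε/√ρ) )^{𝔰(k)} · ( ρ(1−ρ) )^{1/2^k}, where 𝔰(k) := Σ_{j=0}^{k−1} 2^{−j} = 2(1 − 2^{−k}) (with 𝔰(0) = 0). -/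

import Mathlib

open Filter Finset

namespace MullerRatchet17

/-- Auxiliary recursion computing the pair `(p_k, Σ_{ℓ≤k} p_ℓ)` of the equilibrium
type-frequency weights of the tournament ratchet. -/
noncomputable def pAux (ρ : ℝ) : ℕ → ℝ × ℝ
  | 0 => (1 - ρ, 1 - ρ)
  | k+1 =>
    let a := ρ - 1 + 2 * (pAux ρ k).2
    let p := -(1/2) * a + Real.sqrt ((1/4) * a^2 + ρ * (pAux ρ k).1)
    (p, (pAux ρ k).2 + p)

/-- The equilibrium weight `p_k^{(ρ)}`. -/
noncomputable def pseq (ρ : ℝ) (k : ℕ) : ℝ := (pAux ρ k).1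

/-- `𝔰(k) = Σ_{j=0}^{k−1} 2^{−j} = 2(1 − 2^{−k})`, with `𝔰(0) = 0`. -/
noncomputable def sfrak (k : ℕ) : ℝ := ∑ j ∈ Finset.range k, ((2:ℝ)^j)⁻¹

/- ### Auxiliary lemmas -/

lemma pAux_fst_succ (ρ : ℝ) (k : ℕ) :
    (pAux ρ (k+1)).1 = -(1/2) * (ρ - 1 + 2 * (pAux ρ k).2) +
      Real.sqrt ((1/4) * (ρ - 1 + 2 * (pAux ρ k).2)^2 + ρ * (pAux ρ k).1) := rfl

lemma pAux_snd_succ (ρ : ℝ) (k : ℕ) :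
    (pAux ρ (k+1)).2 = (pAux ρ k).2 + (pAux ρ (k+1)).1 := rfl

lemma pseq_zero (ρ : ℝ) : pseq ρ 0 = 1 - ρ := rfl

lemma basics {ρ : ℝ} (h0 : 0 ≤ ρ) (h1 : ρ ≤ 1) :
    ∀ k, 0 ≤ (pAux ρ k).1 ∧ 1 - ρ ≤ (pAux ρ k).2 := by
  intro k
  induction k with
  | zero => exact ⟨by simp [pAux]; linarith, le_refl _⟩
  | succ k ih =>
    obtain ⟨hp, hS⟩ := ih
    have hx : 0 ≤ ρ * (pAux ρ k).1 := mul_nonneg h0 hp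
    set a := ρ - 1 + 2 * (pAux ρ k).2 with ha_def
    have hs : a/2 ≤ Real.sqrt ((1/4) * a^2 + ρ * (pAux ρ k).1) := by
      have h2 : Real.sqrt ((a/2)^2) ≤ Real.sqrt ((1/4) * a^2 + ρ * (pAux ρ k).1) :=
        Real.sqrt_le_sqrt (by nlinarith)
      have h3 : a/2 ≤ |a/2| := le_abs_self _
      rw [Real.sqrt_sq_eq_abs] at h2
      linarith
    have hpp : 0 ≤ (pAux ρ (k+1)).1 := by
      rw [pAux_fst_succ]; rw [← ha_def]; linarith
    refine ⟨hpp, ?_⟩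
    rw [pAux_snd_succ]; linarith

lemma pseq_nonneg {ρ : ℝ} (h0 : 0 ≤ ρ) (h1 : ρ ≤ 1) (k : ℕ) : 0 ≤ pseq ρ k :=
  (basics h0 h1 k).1

lemma a_nonneg {ρ : ℝ} (h0 : 0 ≤ ρ) (h1 : ρ ≤ 1) (k : ℕ) :
    0 ≤ ρ - 1 + 2 * (pAux ρ k).2 := by
  have := (basics h0 h1 k).2
  linarith

lemma pseq_succ_le {ρ : ℝ} (h0 : 0 ≤ ρ) (h1 : ρ ≤ 1) (k : ℕ) :
    pseq ρ (k+1) ≤ Real.sqrt (ρ * pseq ρ k) := by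
  have ha := a_nonneg h0 h1 k
  have hp := pseq_nonneg h0 h1 k
  have hx : 0 ≤ ρ * pseq ρ k := mul_nonneg h0 hp
  set a := ρ - 1 + 2 * (pAux ρ k).2 with ha_def
  have key : Real.sqrt ((1/4) * a^2 + ρ * pseq ρ k) ≤ a/2 + Real.sqrt (ρ * pseq ρ k) := by
    have hsx := Real.sqrt_nonneg (ρ * pseq ρ k)
    have hsq := Real.sq_sqrt hx
    have h2 : Real.sqrt ((1/4) * a^2 + ρ * pseq ρ k) ≤
        Real.sqrt ((a/2 + Real.sqrt (ρ * pseq ρ k))^2) :=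
      Real.sqrt_le_sqrt (by nlinarith)
    rwa [Real.sqrt_sq (by positivity)] at h2
  show (pAux ρ (k+1)).1 ≤ _
  rw [pAux_fst_succ, ← ha_def]
  have : ρ * (pAux ρ k).1 = ρ * pseq ρ k := rfl
  rw [this]
  linarith

lemma pseq_succ_ge {ρ : ℝ} (h0 : 0 ≤ ρ) (h1 : ρ ≤ 1) (k : ℕ) :
    Real.sqrt (ρ * pseq ρ k) - (pAux ρ k).2 ≤ pseq ρ (k+1) := by
  have ha := a_nonneg h0 h1 k
  have hp := pseq_nonneg h0 h1 k
  have hx : 0 ≤ ρ * pseq ρ k := mul_nonneg h0 hp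
  set a := ρ - 1 + 2 * (pAux ρ k).2 with ha_def
  have key : Real.sqrt (ρ * pseq ρ k) ≤ Real.sqrt ((1/4) * a^2 + ρ * pseq ρ k) :=
    Real.sqrt_le_sqrt (by nlinarith)
  show _ ≤ (pAux ρ (k+1)).1
  rw [pAux_fst_succ, ← ha_def]
  have heq : ρ * (pAux ρ k).1 = ρ * pseq ρ k := rfl
  rw [heq]
  have haS : a/2 ≤ (pAux ρ k).2 := by rw [ha_def]; linarith
  linarith

lemma pAux_snd_eq_sum (ρ : ℝ) : ∀ k, (pAux ρ k).2 = ∑ ℓ ∈ Finset.range (k+1), pseq ρ ℓ := by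
  intro k
  induction k with
  | zero => simp [pAux, pseq]
  | succ k ih =>
    rw [Finset.sum_range_succ, ← ih, pAux_snd_succ]
    rfl

lemma sfrak_zero : sfrak 0 = 0 := by simp [sfrak]

lemma sfrak_succ (k : ℕ) : sfrak (k+1) = 1 + sfrak k / 2 := by
  rw [sfrak, Finset.sum_range_succ']
  have : ∀ j : ℕ, ((2:ℝ)^(j+1))⁻¹ = ((2:ℝ)^j)⁻¹ / 2 := by
    intro j; rw [pow_succ]; field_simp
  simp_rw [this]
  rw [← Finset.sum_div]
  rw [sfrak]
  simp; ring

lemma sfrak_nonneg (k : ℕ) : 0 ≤ sfrak k := by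
  unfold sfrak; positivity

lemma sfrak_le_two : ∀ k, sfrak k ≤ 2 := by
  intro k
  induction k with
  | zero => rw [sfrak_zero]; norm_num
  | succ k ih => rw [sfrak_succ]; linarith

/-- Key rpow manipulation: if `q^(1/2^i) ≤ ε ≤ 1`, then for `j ≤ i`,
`q^(1/2^j) ≤ ε^(i-j) * q^(1/2^i)`. -/
lemma rpow_chain {q ε : ℝ} (hq0 : 0 ≤ q) (hε0 : 0 ≤ ε) (hε1 : ε ≤ 1)
    {i j : ℕ} (hji : j ≤ i) (ht : q ^ (1/(2:ℝ)^i) ≤ ε) :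
    q ^ (1/(2:ℝ)^j) ≤ ε^(i-j) * q ^ (1/(2:ℝ)^i) := by
  set t := q ^ (1/(2:ℝ)^i) with ht_def
  have ht0 : 0 ≤ t := Real.rpow_nonneg hq0 _
  have hqt : q ^ (1/(2:ℝ)^j) = t ^ (2^(i-j) : ℕ) := by
    rw [ht_def, ← Real.rpow_natCast (q ^ (1/(2:ℝ)^i)), ← Real.rpow_mul hq0]
    congr 1
    have h2 : (2:ℝ)^j * ((2:ℕ)^(i-j) : ℝ) = (2:ℝ)^i := by
      push_cast
      rw [← pow_add, Nat.add_sub_cancel' hji]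
    push_cast at h2 ⊢
    field_simp
    linarith [h2]
  rw [hqt]
  have h1le : 1 ≤ 2^(i-j) := Nat.one_le_two_pow
  calc t ^ (2^(i-j) : ℕ) = t ^ (2^(i-j) - 1) * t := by
        rw [← pow_succ]; congr 1; omega
    _ ≤ ε ^ (2^(i-j) - 1) * t := by
        exact mul_le_mul_of_nonneg_right (pow_le_pow_left₀ ht0 ht _) ht0
    _ ≤ ε ^ (i-j) * t := by
        refine mul_le_mul_of_nonneg_right ?_ ht0
        refine pow_le_pow_of_le_one hε0 hε1 ?_
        have := @Nat.lt_two_pow_self (i-j)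
        omega

/-- Upper bound: `p_k ≤ (ρ(1-ρ))^(1/2^k)` for `k ≥ 1`. -/
lemma pseq_upper {ρ : ℝ} (h0 : 0 ≤ ρ) (h1 : ρ ≤ 1) :
    ∀ k, 1 ≤ k → pseq ρ k ≤ (ρ * (1 - ρ)) ^ (1/(2:ℝ)^k) := by
  have hq0 : (0:ℝ) ≤ ρ * (1 - ρ) := mul_nonneg h0 (by linarith)
  intro k
  induction k with
  | zero => omega
  | succ k ih =>
    intro _
    rcases Nat.eq_or_lt_of_le (Nat.zero_le k) with hk0 | hk1
    · -- k = 0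
      subst hk0
      have h := pseq_succ_le h0 h1 0
      rw [pseq_zero] at h
      have heq : (ρ * (1 - ρ)) ^ (1/(2:ℝ)^(0+1:ℕ)) = Real.sqrt (ρ * (1 - ρ)) := by
        rw [Real.sqrt_eq_rpow]; norm_num
      rw [heq]
      exact h
    · have ihk := ih hk1
      have hp := pseq_nonneg h0 h1 k
      calc pseq ρ (k+1) ≤ Real.sqrt (ρ * pseq ρ k) := pseq_succ_le h0 h1 k
        _ ≤ Real.sqrt (pseq ρ k) := by
            apply Real.sqrt_le_sqrt; nlinarith
        _ ≤ Real.sqrt ((ρ * (1 - ρ)) ^ (1/(2:ℝ)^k)) := Real.sqrt_le_sqrt ihk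
        _ = (ρ * (1 - ρ)) ^ (1/(2:ℝ)^(k+1)) := by
            rw [Real.sqrt_eq_rpow, ← Real.rpow_mul hq0]
            congr 1
            rw [pow_succ]
            field_simp

set_option maxHeartbeats 1000000 in
/-- Lower bound for the equilibrium weights in the near-critical scaling: with
`ρ = 1 − N^{−δ}` and `K_ε` defined by `(ρ(1−ρ))^{1/2^{K_ε}} ≤ ε ≤ (ρ(1−ρ))^{1/2^{K_ε+1}}`,
one has `p_k^{(N,δ)} ≥ (√ρ(1 − 3ε/√ρ))^{𝔰(k)} (ρ(1−ρ))^{1/2^k}` for all `k ≤ K_ε`. -/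
theorem statement17 (δ : ℝ) (hδ0 : 0 < δ) (hδ1 : δ < 1) :
    ∃ ε₀ > (0:ℝ), ∀ ε : ℝ, 0 < ε → ε < ε₀ → ∃ N₀ : ℕ, ∀ N : ℕ, N₀ ≤ N →
      ∀ Kε : ℕ,
        ((1 - (N:ℝ)^(-δ)) * (N:ℝ)^(-δ)) ^ (1 / (2:ℝ)^Kε) ≤ ε →
        ε ≤ ((1 - (N:ℝ)^(-δ)) * (N:ℝ)^(-δ)) ^ (1 / (2:ℝ)^(Kε+1)) →
        ∀ k : ℕ, k ≤ Kε →
          (Real.sqrt (1 - (N:ℝ)^(-δ)) *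
              (1 - 3*ε / Real.sqrt (1 - (N:ℝ)^(-δ)))) ^ (sfrak k) *
            ((1 - (N:ℝ)^(-δ)) * (N:ℝ)^(-δ)) ^ (1 / (2:ℝ)^k)
            ≤ pseq (1 - (N:ℝ)^(-δ)) k := by
  refine ⟨1/100, by norm_num, ?_⟩
  intro ε hε0 hε1
  -- choose N₀ so that N^{-δ} < 1/100 for N ≥ N₀
  have htend : Tendsto (fun N : ℕ => ((N:ℝ)) ^ (-δ)) atTop (nhds 0) :=
    (tendsto_rpow_neg_atTop hδ0).comp tendsto_natCast_atTop_atTop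
  have hev : ∀ᶠ N : ℕ in atTop, ((N:ℝ)) ^ (-δ) < 1/100 :=
    htend.eventually_lt_const (by norm_num)
  obtain ⟨N₁, hN₁⟩ := eventually_atTop.mp hev
  refine ⟨max N₁ 1, ?_⟩
  intro N hN Kε hK1 _hK2
  have hN1 : 1 ≤ N := le_trans (le_max_right _ _) hN
  have hNN₁ : N₁ ≤ N := le_trans (le_max_left _ _) hN
  set r := ((N:ℝ)) ^ (-δ) with hr_def
  have hr0 : 0 < r := Real.rpow_pos_of_pos (by exact_mod_cast Nat.lt_of_lt_of_le Nat.zero_lt_one hN1) _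
  have hr1 : r < 1/100 := hN₁ N hNN₁
  set ρ := 1 - r with hρ_def
  have hρ0 : (99:ℝ)/100 < ρ := by rw [hρ_def]; linarith
  have hρ1 : ρ < 1 := by rw [hρ_def]; linarith
  have hρnn : (0:ℝ) ≤ ρ := by linarith
  have hρle1 : ρ ≤ 1 := le_of_lt hρ1
  -- √ρ bounds
  have hsρ_lb : (99:ℝ)/100 ≤ Real.sqrt ρ := by
    have : ρ ≤ Real.sqrt ρ := by
      nlinarith [Real.sq_sqrt hρnn, Real.sqrt_nonneg ρ]
    linarith
  have hsρ_ub : Real.sqrt ρ < 1 := by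
    nlinarith [Real.sq_sqrt hρnn, Real.sqrt_nonneg ρ]
  have hsρ_pos : 0 < Real.sqrt ρ := by linarith
  -- the constant c
  set c := Real.sqrt ρ - 3 * ε with hc_def
  have hc_lb : (96:ℝ)/100 ≤ c := by rw [hc_def]; linarith
  have hc0 : 0 < c := by linarith
  have hc1 : c ≤ 1 := by rw [hc_def]; linarith
  have hbase : Real.sqrt ρ * (1 - 3*ε / Real.sqrt ρ) = c := by
    rw [hc_def]; field_simp
  rw [hbase]
  -- q facts
  set Q := ρ * r with hQ_def
  have hQρ : Q = ρ * (1 - ρ) := by rw [hQ_def, hρ_def]; ring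
  have hQ0 : 0 < Q := mul_pos (by linarith) hr0
  have hQ1 : Q ≤ 1 := by rw [hQ_def]; nlinarith
  have hεle : ε ≤ 1 := by linarith
  -- q^{1/2^m} ≤ ε for m ≤ Kε
  have hq_eps : ∀ m, m ≤ Kε → Q ^ (1/(2:ℝ)^m) ≤ ε := by
    intro m hm
    have := rpow_chain hQ0.le hε0.le hεle hm hK1
    calc Q ^ (1/(2:ℝ)^m) ≤ ε^(Kε-m) * Q ^ (1/(2:ℝ)^Kε) := this
      _ ≤ 1 * ε := by
          apply mul_le_mul (pow_le_one₀ hε0.le hεle) hK1 (Real.rpow_nonneg hQ0.le _) zero_le_one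
      _ = ε := one_mul ε
  -- sum bound: for k+1 ≤ Kε, S_k ≤ 3 ε c Q^{1/2^{k+1}}
  have hSbound : ∀ k : ℕ, k + 1 ≤ Kε →
      (pAux ρ k).2 ≤ 3 * ε * c * Q ^ (1/(2:ℝ)^(k+1)) := by
    intro k hk
    set T := Q ^ (1/(2:ℝ)^(k+1)) with hT_def
    have hT0 : 0 ≤ T := Real.rpow_nonneg hQ0.le _
    have hTε : Q ^ (1/(2:ℝ)^(k+1)) ≤ ε := hq_eps (k+1) hk
    have hterm : ∀ ℓ ∈ Finset.range (k+1), pseq ρ ℓ ≤ 2 * (ε^(k+1-ℓ) * T) := by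
      intro ℓ hℓ
      have hℓk : ℓ ≤ k := Nat.lt_succ_iff.mp (Finset.mem_range.mp hℓ)
      have hchain := rpow_chain hQ0.le hε0.le hεle (Nat.le_succ_of_le hℓk) hTε
      rcases Nat.eq_zero_or_pos ℓ with h0 | hpos
      · subst h0
        have hps : pseq ρ 0 = 1 - ρ := pseq_zero ρ
        have h2Q : pseq ρ 0 ≤ 2 * Q := by
          rw [hps, hQ_def, hρ_def]; nlinarith
        have hQ1' : Q ^ (1/(2:ℝ)^(0:ℕ)) = Q := by norm_num
        calc pseq ρ 0 ≤ 2 * Q := h2Q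
          _ = 2 * Q ^ (1/(2:ℝ)^(0:ℕ)) := by rw [hQ1']
          _ ≤ 2 * (ε^(k+1-0) * T) := by
              apply mul_le_mul_of_nonneg_left _ (by norm_num)
              exact hchain
      · have hup := pseq_upper hρnn hρle1 ℓ hpos
        rw [← hQρ] at hup
        calc pseq ρ ℓ ≤ Q ^ (1/(2:ℝ)^ℓ) := hup
          _ ≤ ε^(k+1-ℓ) * T := hchain
          _ ≤ 2 * (ε^(k+1-ℓ) * T) := by
              have : 0 ≤ ε^(k+1-ℓ) * T := mul_nonneg (pow_nonneg hε0.le _) hT0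
              linarith
    have hsum : (pAux ρ k).2 ≤ ∑ ℓ ∈ Finset.range (k+1), 2 * (ε^(k+1-ℓ) * T) := by
      rw [pAux_snd_eq_sum]
      exact Finset.sum_le_sum hterm
    have hgeom : ∑ ℓ ∈ Finset.range (k+1), ε^(k+1-ℓ) ≤ ε / (1 - ε) := by
      have hrefl : ∑ ℓ ∈ Finset.range (k+1), ε^(k+1-ℓ)
          = ∑ j ∈ Finset.range (k+1), ε^(j+1) := by
        rw [← Finset.sum_range_reflect (fun j => ε^(j+1)) (k+1)]
        apply Finset.sum_congr rfl
        intro ℓ hℓ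
        have hℓk : ℓ ≤ k := Nat.lt_succ_iff.mp (Finset.mem_range.mp hℓ)
        congr 1
        omega
      rw [hrefl]
      have hfac : ∑ j ∈ Finset.range (k+1), ε^(j+1)
          = ε * ∑ j ∈ Finset.range (k+1), ε^j := by
        rw [Finset.mul_sum]
        apply Finset.sum_congr rfl
        intro j _
        rw [pow_succ]; ring
      rw [hfac]
      have hg : ∑ j ∈ Finset.range (k+1), ε^j = (ε^(k+1) - 1)/(ε - 1) :=
        geom_sum_eq (by linarith) _
      rw [hg]
      have hεn0 : 0 ≤ ε^(k+1) := pow_nonneg hε0.le _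
      have hεn1 : ε^(k+1) ≤ 1 := pow_le_one₀ hε0.le hεle
      have h1ε : (0:ℝ) < 1 - ε := by linarith
      have heq2 : (ε^(k+1) - 1)/(ε-1) = (1 - ε^(k+1))/(1-ε) := by
        rw [← neg_div_neg_eq]; ring_nf
      rw [heq2, ← mul_div_assoc, div_le_div_iff₀ h1ε h1ε]
      nlinarith [mul_nonneg (mul_nonneg hε0.le h1ε.le) hεn0]
    calc (pAux ρ k).2 ≤ ∑ ℓ ∈ Finset.range (k+1), 2 * (ε^(k+1-ℓ) * T) := hsum
      _ = 2 * T * ∑ ℓ ∈ Finset.range (k+1), ε^(k+1-ℓ) := by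
          rw [Finset.mul_sum]; apply Finset.sum_congr rfl; intro ℓ _; ring
      _ ≤ 2 * T * (ε / (1 - ε)) := by
          apply mul_le_mul_of_nonneg_left hgeom (by linarith)
      _ ≤ 3 * ε * c * T := by
          have h1ε : (0:ℝ) < 1 - ε := by linarith
          have hdiv : ε/(1-ε) ≤ (100/99)*ε := by
            rw [div_le_iff₀ h1ε]
            nlinarith [mul_pos hε0 (show (0:ℝ) < 1/100 - ε by linarith)]
          calc 2 * T * (ε/(1-ε)) ≤ 2 * T * ((100/99)*ε) := by
                apply mul_le_mul_of_nonneg_left hdiv (by linarith)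
            _ ≤ 3 * ε * c * T := by nlinarith [mul_nonneg hε0.le hT0]
    -- end hSbound
  -- main induction
  intro k hkK
  induction k with
  | zero =>
    rw [sfrak_zero, Real.rpow_zero, one_mul]
    have h1 : (1/(2:ℝ)^(0:ℕ)) = 1 := by norm_num
    rw [h1, Real.rpow_one, pseq_zero]
    rw [hρ_def]
    nlinarith
  | succ k ih =>
    have hk1K : k + 1 ≤ Kε := hkK
    have ihk := ih (by omega)
    set T := Q ^ (1/(2:ℝ)^(k+1)) with hT_def
    have hT0 : 0 ≤ T := Real.rpow_nonneg hQ0.le _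
    -- lower bound for sqrt(ρ p_k)
    have hcs0 : (0:ℝ) ≤ c ^ (sfrak k) := Real.rpow_nonneg hc0.le _
    have hQk0 : (0:ℝ) ≤ Q ^ (1/(2:ℝ)^k) := Real.rpow_nonneg hQ0.le _
    have hmono : ρ * (c ^ (sfrak k) * Q ^ (1/(2:ℝ)^k)) ≤ ρ * pseq ρ k :=
      mul_le_mul_of_nonneg_left ihk hρnn
    have hsqrt_prod : Real.sqrt (ρ * (c ^ (sfrak k) * Q ^ (1/(2:ℝ)^k)))
        = Real.sqrt ρ * (c ^ (sfrak k / 2) * T) := by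
      rw [Real.sqrt_mul hρnn, Real.sqrt_mul hcs0]
      congr 1
      congr 1
      · rw [Real.sqrt_eq_rpow, ← Real.rpow_mul hc0.le]
        congr 1; ring
      · rw [hT_def, Real.sqrt_eq_rpow, ← Real.rpow_mul hQ0.le]
        congr 1
        rw [pow_succ]
        field_simp
    have hlow : Real.sqrt ρ * (c ^ (sfrak k / 2) * T) ≤ Real.sqrt (ρ * pseq ρ k) := by
      rw [← hsqrt_prod]
      exact Real.sqrt_le_sqrt hmono
    -- c ≤ c^{sfrak k / 2}
    have hcexp : c ≤ c ^ (sfrak k / 2) := by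
      have h2 : sfrak k / 2 ≤ 1 := by linarith [sfrak_le_two k]
      have := Real.rpow_le_rpow_of_exponent_ge hc0 hc1 h2
      rwa [Real.rpow_one] at this
    have hcs0' : (0:ℝ) ≤ c ^ (sfrak k / 2) := Real.rpow_nonneg hc0.le _
    -- sum bound
    have hS := hSbound k hk1K
    have hS' : (pAux ρ k).2 ≤ 3 * ε * (c ^ (sfrak k / 2)) * T := by
      calc (pAux ρ k).2 ≤ 3 * ε * c * T := hS
        _ ≤ 3 * ε * (c ^ (sfrak k / 2)) * T := by
            apply mul_le_mul_of_nonneg_right _ hT0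
            have h3 : (0:ℝ) ≤ 3 * ε := by linarith
            nlinarith
    -- combine
    have hmain := pseq_succ_ge hρnn hρle1 k
    have hfinal : (Real.sqrt ρ - 3 * ε) * (c ^ (sfrak k / 2) * T) ≤ pseq ρ (k+1) := by
      have : (Real.sqrt ρ - 3*ε) * (c ^ (sfrak k / 2) * T)
          = Real.sqrt ρ * (c ^ (sfrak k / 2) * T) - 3 * ε * (c ^ (sfrak k / 2)) * T := by
        ring
      rw [this]
      have := sub_le_sub hlow hS'
      linarith
    have hcc : c ^ (sfrak (k+1)) = c * c ^ (sfrak k / 2) := by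
      rw [sfrak_succ, Real.rpow_add hc0, Real.rpow_one]
    calc c ^ (sfrak (k+1)) * T = c * c ^ (sfrak k / 2) * T := by rw [hcc]
      _ = (Real.sqrt ρ - 3*ε) * (c ^ (sfrak k / 2) * T) := by rw [hc_def]; ring
      _ ≤ pseq ρ (k+1) := hfinal

end MullerRatchet17
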